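/- Let δ ∈ (0,1) and let Φ = (φ_1,…,φ_m) be unit vectors in ℝ^d satisfying: (i) for all nonzero x, y ∈ ℝ^d, (1/m)·#{1 ≤ i ≤ m : σ(⟨x,φ_i⟩) ≠ σ(⟨y,φ_i⟩)} ≤ δ + d(x̂,ŷ); (ii) for all z ∈ ℝ^d, (1/m)Σ_{i=1}^m ⟨z,φ_i⟩⁴·1{⟨z,φ_i⟩² ≤ ‖z‖²/(δd)} ≤ 4‖z‖⁴/d²; and (iii) for all z ∈ ℝ^d, (1/m)Σ_{i=1}^m ⟨z,φ_i⟩²·1{⟨z,φ_i⟩² > ‖z‖²/(δd)} ≤ 4δ‖z‖²/d. Then for all nonzero x, y ∈ ℝ^d, (1/m)Σ_{i=1}^m |σ(⟨x,φ_i⟩) − σ(⟨y,φ_i⟩)|²·⟨x−y,φ_i⟩² ≤ (8·(δ + d(x̂,ŷ))^{1/2} + 16δ)·‖x−y‖²/d. -/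

import Mathlib

open InnerProductGeometry Finset
open scoped RealInnerProductSpace Classical

/-- The sign function with the convention `σ(w) = 1` if `w ≥ 0` and `σ(w) = -1` if `w < 0`. -/
noncomputable def sgn (w : ℝ) : ℝ := if 0 ≤ w then 1 else -1

lemma sgn_diff_sq (a b : ℝ) :
    (sgn a - sgn b) ^ 2 = if sgn a ≠ sgn b then 4 else 0 := by
  by_cases h : sgn a = sgn b
  · simp [h]
  · rw [if_pos h]
    unfold sgn at h ⊢
    split_ifs at h ⊢ <;> (norm_num at h <;> norm_num)

theorem admissible_implies_mismatch_sum_bound (d m : ℕ) (δ : ℝ) (hδ : δ ∈ Set.Ioo (0 : ℝ) 1)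
    (Φ : Fin m → EuclideanSpace ℝ (Fin d)) (hunit : ∀ i, ‖Φ i‖ = 1)
    (h1 : ∀ x y : EuclideanSpace ℝ (Fin d), x ≠ 0 → y ≠ 0 →
      ((univ.filter fun i => sgn ⟪x, Φ i⟫ ≠ sgn ⟪y, Φ i⟫).card : ℝ) / m
        ≤ δ + angle x y / Real.pi)
    (h3 : ∀ z : EuclideanSpace ℝ (Fin d),
      (1 / m : ℝ) * ∑ i, (if ⟪z, Φ i⟫ ^ 2 ≤ ‖z‖ ^ 2 / (δ * d) then ⟪z, Φ i⟫ ^ 4 else 0)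
        ≤ 4 * ‖z‖ ^ 4 / d ^ 2)
    (h4 : ∀ z : EuclideanSpace ℝ (Fin d),
      (1 / m : ℝ) * ∑ i, (if ‖z‖ ^ 2 / (δ * d) < ⟪z, Φ i⟫ ^ 2 then ⟪z, Φ i⟫ ^ 2 else 0)
        ≤ 4 * δ * ‖z‖ ^ 2 / d)
    (x y : EuclideanSpace ℝ (Fin d)) (hx : x ≠ 0) (hy : y ≠ 0) :
    (1 / m : ℝ) * ∑ i, (sgn ⟪x, Φ i⟫ - sgn ⟪y, Φ i⟫) ^ 2 * ⟪x - y, Φ i⟫ ^ 2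
      ≤ (8 * Real.sqrt (δ + angle x y / Real.pi) + 16 * δ) * ‖x - y‖ ^ 2 / d := by
  have hd : 0 < (d : ℝ) := by
    rcases Nat.eq_zero_or_pos d with h | h
    · exfalso; apply hx; subst h; ext i; exact i.elim0
    · exact_mod_cast h
  set z : EuclideanSpace ℝ (Fin d) := x - y with hzdef
  have hang : 0 ≤ δ + angle x y / Real.pi :=
    add_nonneg hδ.1.le (div_nonneg (angle_nonneg x y) Real.pi_pos.le)
  set s : ℝ := Real.sqrt (δ + angle x y / Real.pi) with hsdef
  have hs : 0 ≤ s := Real.sqrt_nonneg _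
  have hs2 : s ^ 2 = δ + angle x y / Real.pi := Real.sq_sqrt hang
  rcases Nat.eq_zero_or_pos m with hm | hm
  · subst hm
    simp only [Finset.univ_eq_empty, Finset.sum_empty, mul_zero]
    exact div_nonneg (mul_nonneg (by nlinarith [hs, hδ.1]) (sq_nonneg ‖z‖)) hd.le
  have hmR : 0 < (m : ℝ) := by exact_mod_cast hm
  set S : Finset (Fin m) := univ.filter fun i => sgn ⟪x, Φ i⟫ ≠ sgn ⟪y, Φ i⟫ with hS
  set A : ℝ := ∑ i ∈ S, (if ⟪z, Φ i⟫ ^ 2 ≤ ‖z‖ ^ 2 / (δ * d) then ⟪z, Φ i⟫ ^ 2 else 0)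
    with hA
  set B : ℝ := ∑ i ∈ S, (if ‖z‖ ^ 2 / (δ * d) < ⟪z, Φ i⟫ ^ 2 then ⟪z, Φ i⟫ ^ 2 else 0)
    with hB
  have hsum : ∑ i, (sgn ⟪x, Φ i⟫ - sgn ⟪y, Φ i⟫) ^ 2 * ⟪z, Φ i⟫ ^ 2 = 4 * A + 4 * B := by
    have : ∀ i, (sgn ⟪x, Φ i⟫ - sgn ⟪y, Φ i⟫) ^ 2 * ⟪z, Φ i⟫ ^ 2
        = (if sgn ⟪x, Φ i⟫ ≠ sgn ⟪y, Φ i⟫ then 4 * ⟪z, Φ i⟫ ^ 2 else 0) := by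
      intro i
      rw [sgn_diff_sq]
      split_ifs <;> ring
    rw [Finset.sum_congr rfl fun i _ => this i, ← Finset.sum_filter, ← hS]
    have e2 : ∀ i ∈ S, 4 * ⟪z, Φ i⟫ ^ 2
        = 4 * (if ⟪z, Φ i⟫ ^ 2 ≤ ‖z‖ ^ 2 / (δ * d) then ⟪z, Φ i⟫ ^ 2 else 0)
          + 4 * (if ‖z‖ ^ 2 / (δ * d) < ⟪z, Φ i⟫ ^ 2 then ⟪z, Φ i⟫ ^ 2 else 0) := by
      intro i _
      by_cases h : ⟪z, Φ i⟫ ^ 2 ≤ ‖z‖ ^ 2 / (δ * d)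
      · rw [if_pos h, if_neg (not_lt.mpr h)]; ring
      · rw [if_neg h, if_pos (not_le.mp h)]; ring
    rw [Finset.sum_congr rfl e2, Finset.sum_add_distrib, ← Finset.mul_sum, ← Finset.mul_sum,
      ← hA, ← hB]
  -- bound on B
  have hBle : B ≤ ∑ i, (if ‖z‖ ^ 2 / (δ * d) < ⟪z, Φ i⟫ ^ 2 then ⟪z, Φ i⟫ ^ 2 else 0) := by
    apply Finset.sum_le_sum_of_subset_of_nonneg (Finset.subset_univ S)
    intro i _ _
    split_ifs <;> positivity
  have hB4 : (1 / m : ℝ) * B ≤ 4 * δ * ‖z‖ ^ 2 / d := by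
    refine le_trans ?_ (h4 z)
    have : 0 < (1 / m : ℝ) := by positivity
    exact mul_le_mul_of_nonneg_left hBle this.le
  -- bound on A via Cauchy–Schwarz
  have hcard : (S.card : ℝ) ≤ (δ + angle x y / Real.pi) * m := by
    have := h1 x y hx hy
    rw [div_le_iff₀ hmR] at this
    exact this
  set C : ℝ := ∑ i, (if ⟪z, Φ i⟫ ^ 2 ≤ ‖z‖ ^ 2 / (δ * d) then ⟪z, Φ i⟫ ^ 4 else 0) with hC
  have hCle : C ≤ 4 * ‖z‖ ^ 4 / d ^ 2 * m := by
    have := h3 z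
    rw [one_div, inv_mul_le_iff₀ hmR] at this
    linarith [this]
  have hCnn : 0 ≤ C := by
    apply Finset.sum_nonneg
    intro i _
    split_ifs <;> positivity
  have hAnn : 0 ≤ A := by
    apply Finset.sum_nonneg
    intro i _
    split_ifs <;> positivity
  have hCS : A ^ 2 ≤ (S.card : ℝ) * C := by
    have h := Finset.sum_mul_sq_le_sq_mul_sq S (fun _ => (1 : ℝ))
      (fun i => if ⟪z, Φ i⟫ ^ 2 ≤ ‖z‖ ^ 2 / (δ * d) then ⟪z, Φ i⟫ ^ 2 else 0)
    simp only [one_mul, one_pow] at h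
    calc A ^ 2 ≤ (∑ _i ∈ S, (1:ℝ)) *
        ∑ i ∈ S, (if ⟪z, Φ i⟫ ^ 2 ≤ ‖z‖ ^ 2 / (δ * d) then ⟪z, Φ i⟫ ^ 2 else 0) ^ 2 := h
      _ ≤ (S.card : ℝ) * C := by
          rw [Finset.sum_const, nsmul_eq_mul, mul_one]
          apply mul_le_mul_of_nonneg_left _ (Nat.cast_nonneg _)
          refine le_trans (Finset.sum_le_sum_of_subset_of_nonneg (Finset.subset_univ S)
            fun i _ _ => by positivity) ?_
          apply Finset.sum_le_sum
          intro i _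
          split_ifs with h
          · exact le_of_eq (by ring)
          · simp
  have hA2 : A ^ 2 ≤ (2 * s * ‖z‖ ^ 2 * m / d) ^ 2 := by
    have h1' : A ^ 2 ≤ (δ + angle x y / Real.pi) * m * (4 * ‖z‖ ^ 4 / d ^ 2 * m) := by
      calc A ^ 2 ≤ (S.card : ℝ) * C := hCS
        _ ≤ (δ + angle x y / Real.pi) * m * (4 * ‖z‖ ^ 4 / d ^ 2 * m) := by
            apply mul_le_mul hcard hCle hCnn (by positivity)
    calc A ^ 2 ≤ (δ + angle x y / Real.pi) * m * (4 * ‖z‖ ^ 4 / d ^ 2 * m) := h1'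
      _ = (2 * s * ‖z‖ ^ 2 * m / d) ^ 2 := by
          rw [← hs2]; field_simp; ring
  have hAle : A ≤ 2 * s * ‖z‖ ^ 2 * m / d := by
    have hrhs : 0 ≤ 2 * s * ‖z‖ ^ 2 * m / d := by positivity
    nlinarith [hA2, hAnn, hrhs]
  have hA4 : (1 / m : ℝ) * (4 * A) ≤ 8 * s * ‖z‖ ^ 2 / d := by
    have hdm : A / m ≤ 2 * s * ‖z‖ ^ 2 / d := by
      rw [div_le_div_iff₀ hmR hd]
      calc A * d ≤ 2 * s * ‖z‖ ^ 2 * m / d * d := by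
            exact mul_le_mul_of_nonneg_right hAle hd.le
        _ = 2 * s * ‖z‖ ^ 2 * m := by field_simp
    calc (1 / m : ℝ) * (4 * A) = 4 * (A / m) := by ring
      _ ≤ 4 * (2 * s * ‖z‖ ^ 2 / d) := by linarith
      _ = 8 * s * ‖z‖ ^ 2 / d := by ring
  calc (1 / m : ℝ) * ∑ i, (sgn ⟪x, Φ i⟫ - sgn ⟪y, Φ i⟫) ^ 2 * ⟪z, Φ i⟫ ^ 2
      = (1 / m : ℝ) * (4 * A) + 4 * ((1 / m : ℝ) * B) := by rw [hsum]; ring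
    _ ≤ 8 * s * ‖z‖ ^ 2 / d + 4 * (4 * δ * ‖z‖ ^ 2 / d) := by
        have := mul_le_mul_of_nonneg_left hB4 (by norm_num : (0:ℝ) ≤ 4)
        linarith [hA4, this]
    _ = (8 * s + 16 * δ) * ‖z‖ ^ 2 / d := by ring
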